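/- arXiv:1304.5283 — 6 statements merged into one kernel-verified Lean document; each statement's English description precedes it below -/
import Mathlib

section
/- For all real parameters α₁, α₂, λ₁, λ₂ and every point x = (x₁,x₂,x₃,x₄) ∈ ℝ⁴, the Euclidean inner product of X(x) with x equals ‖x‖²(1 − ‖x‖²); in particular X is tangent to the unit sphere S³ = {x ∈ ℝ⁴ : ‖x‖ = 1}. -/
open scoped RealInnerProductSpace

/-- The vector field `X` of equation (1), with parameters `α₁ α₂` and
symmetry-breaking parameters `lam₁ lam₂` (called `λ₁ λ₂` in the paper). -/
noncomputable def Xfield (α₁ α₂ lam₁ lam₂ : ℝ) (x : EuclideanSpace ℝ (Fin 4)) :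
    EuclideanSpace ℝ (Fin 4) :=
  let x₁ := x 0; let x₂ := x 1; let x₃ := x 2; let x₄ := x 3
  let r2 := x₁ ^ 2 + x₂ ^ 2 + x₃ ^ 2 + x₄ ^ 2
  WithLp.toLp 2 ![x₁ * (1 - r2) - x₂ - α₁ * x₁ * x₄ + α₂ * x₁ * x₄ ^ 2 + lam₂ * x₃ ^ 2 * x₄,
    x₂ * (1 - r2) + x₁ - α₁ * x₂ * x₄ + α₂ * x₂ * x₄ ^ 2,
    x₃ * (1 - r2) + α₁ * x₃ * x₄ + α₂ * x₃ * x₄ ^ 2 + lam₁ * x₁ * x₂ * x₄ - lam₂ * x₁ * x₃ * x₄,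
    x₄ * (1 - r2) - α₁ * (x₃ ^ 2 - x₁ ^ 2 - x₂ ^ 2) - α₂ * x₄ * (x₁ ^ 2 + x₂ ^ 2 + x₃ ^ 2)
      - lam₁ * x₁ * x₂ * x₃]

/-- The inner product of `X(x)` with `x` equals `‖x‖²(1 − ‖x‖²)`; in particular `X` is
tangent to the unit sphere `S³`. -/
theorem stmt0 (α₁ α₂ lam₁ lam₂ : ℝ) (x : EuclideanSpace ℝ (Fin 4)) :
    ⟪Xfield α₁ α₂ lam₁ lam₂ x, x⟫ = ‖x‖ ^ 2 * (1 - ‖x‖ ^ 2) ∧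
    (‖x‖ = 1 → ⟪Xfield α₁ α₂ lam₁ lam₂ x, x⟫ = 0) := by
  have hn : ‖x‖ ^ 2 = x 0 ^ 2 + x 1 ^ 2 + x 2 ^ 2 + x 3 ^ 2 := by
    rw [← real_inner_self_eq_norm_sq, EuclideanSpace.inner_eq_star_dotProduct]
    simp [dotProduct, Fin.sum_univ_four, sq]
  have h : ⟪Xfield α₁ α₂ lam₁ lam₂ x, x⟫ = ‖x‖ ^ 2 * (1 - ‖x‖ ^ 2) := by
    rw [hn]
    simp only [Xfield, PiLp.inner_apply, RCLike.inner_apply, Fin.sum_univ_four]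
    norm_num [Matrix.cons_val_zero, Matrix.cons_val_one, Matrix.cons_val_two, Matrix.cons_val_three,
      Matrix.vecHead, Matrix.vecTail]
    ring
  exact ⟨h, fun h1 => by rw [h, h1]; ring⟩
end

section
/- The unit sphere is flow-invariant: for all real parameters α₁, α₂, λ₁, λ₂, if u : ℝ → ℝ⁴ is differentiable with u'(t) = X(u(t)) for all t ∈ ℝ and ‖u(0)‖ = 1, then ‖u(t)‖ = 1 for all t ∈ ℝ. -/
/-- Key algebraic identity: `⟪X(x), x⟫ = r² (1 - r²)`. -/
lemma inner_Xfield (α₁ α₂ lam₁ lam₂ : ℝ) (x : EuclideanSpace ℝ (Fin 4)) :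
    (inner ℝ (Xfield α₁ α₂ lam₁ lam₂ x) x : ℝ) =
      (x 0 ^ 2 + x 1 ^ 2 + x 2 ^ 2 + x 3 ^ 2) * (1 - (x 0 ^ 2 + x 1 ^ 2 + x 2 ^ 2 + x 3 ^ 2)) := by
  simp [Xfield, PiLp.inner_apply, RCLike.inner_apply, Fin.sum_univ_four]
  ring

lemma inner_self_euclid (x : EuclideanSpace ℝ (Fin 4)) :
    (inner ℝ x x : ℝ) = x 0 ^ 2 + x 1 ^ 2 + x 2 ^ 2 + x 3 ^ 2 := by
  simp only [PiLp.inner_apply, RCLike.inner_apply, Fin.sum_univ_four, conj_trivial]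
  ring

/-- The unit sphere is flow-invariant for the flow of `X`. -/
theorem stmt1 (α₁ α₂ lam₁ lam₂ : ℝ) (u : ℝ → EuclideanSpace ℝ (Fin 4))
    (hu : ∀ t : ℝ, HasDerivAt u (Xfield α₁ α₂ lam₁ lam₂ (u t)) t)
    (h0 : ‖u 0‖ = 1) :
    ∀ t : ℝ, ‖u t‖ = 1 := by
  set g : ℝ → ℝ := fun t => (inner ℝ (u t) (u t) : ℝ) - 1 with hg_def
  have hg : ∀ t, HasDerivAt g (-2 * (g t + 1) * g t) t := by
    intro t
    have h := ((hu t).inner ℝ (hu t)).sub_const 1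
    have key : (inner ℝ (u t) (Xfield α₁ α₂ lam₁ lam₂ (u t)) : ℝ)
        + (inner ℝ (Xfield α₁ α₂ lam₁ lam₂ (u t)) (u t) : ℝ) = -2 * (g t + 1) * g t := by
      rw [show (inner ℝ (u t) (Xfield α₁ α₂ lam₁ lam₂ (u t)) : ℝ)
          = (inner ℝ (Xfield α₁ α₂ lam₁ lam₂ (u t)) (u t) : ℝ) from real_inner_comm _ _,
        inner_Xfield]
      have h2 := inner_self_euclid (u t)
      simp only [hg_def]
      rw [h2]; ring
    rwa [key] at h
  have hgd : Differentiable ℝ g := fun t => (hg t).differentiableAt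
  have hgc : Continuous (fun t => 2 * (g t + 1)) :=
    continuous_const.mul (hgd.continuous.add continuous_const)
  -- φ t = ∫₀ᵗ 2 (g s + 1) ds
  set φ : ℝ → ℝ := fun t => ∫ s in (0:ℝ)..t, 2 * (g s + 1) with hφ_def
  have hφ : ∀ t, HasDerivAt φ (2 * (g t + 1)) t := fun t =>
    (hgc.integral_hasStrictDerivAt 0 t).hasDerivAt
  -- F = g · exp φ is constant
  set F : ℝ → ℝ := fun t => g t * Real.exp (φ t) with hF_def
  have hF : ∀ t, HasDerivAt F 0 t := by
    intro t
    have h := (hg t).mul ((hφ t).exp)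
    have : -2 * (g t + 1) * g t * Real.exp (φ t)
        + g t * (Real.exp (φ t) * (2 * (g t + 1))) = 0 := by ring
    rwa [this] at h
  have hconst : ∀ t, F t = F 0 := by
    intro t
    have := is_const_of_deriv_eq_zero (fun s => (hF s).differentiableAt)
      (fun s => (hF s).deriv) t 0
    exact this
  have hg0 : g 0 = 0 := by
    simp only [hg_def, real_inner_self_eq_norm_sq, h0]
    norm_num
  intro t
  have hFt : F t = 0 := by
    rw [hconst t, hF_def]
    simp [hg0]
  have hgt : g t = 0 := by
    have hexp : Real.exp (φ t) ≠ 0 := (Real.exp_pos _).ne'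
    simpa [hF_def, hexp] using hFt
  have hnorm : ‖u t‖ ^ 2 = 1 := by
    have := real_inner_self_eq_norm_sq (u t)
    simp only [hg_def] at hgt
    linarith [this ▸ hgt]
  nlinarith [norm_nonneg (u t), hnorm]
end

section
/- The unit sphere is globally attracting: for all real parameters α₁, α₂, λ₁, λ₂, if u : ℝ → ℝ⁴ satisfies u'(t) = X(u(t)) for all t ≥ 0 and u(0) ≠ 0, then ‖u(t)‖ tends to 1 as t → +∞. -/
open Filter

open Real Set

lemma inner_X (α₁ α₂ lam₁ lam₂ : ℝ) (x : EuclideanSpace ℝ (Fin 4)) :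
    (inner ℝ x (Xfield α₁ α₂ lam₁ lam₂ x) : ℝ) + inner ℝ (Xfield α₁ α₂ lam₁ lam₂ x) x =
      2 * ((inner ℝ x x : ℝ) * (1 - (inner ℝ x x : ℝ))) := by
  simp only [PiLp.inner_apply, RCLike.inner_apply, conj_trivial, Fin.sum_univ_four, Xfield, PiLp.toLp_apply]
  simp only [Matrix.cons_val_zero, Matrix.cons_val_one, Matrix.head_cons,
    Matrix.cons_val_two, Matrix.tail_cons, Matrix.cons_val_three]
  ring

/-- explicit logistic solution -/
noncomputable def phi (c t : ℝ) : ℝ := c * exp (2 * t) / (1 + c * (exp (2 * t) - 1))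

lemma phi_denom_pos {c : ℝ} (hc : 0 < c) {t : ℝ} (ht : 0 ≤ t) :
    0 < 1 + c * (exp (2 * t) - 1) := by
  have h1 : (1 : ℝ) ≤ exp (2 * t) := by
    rw [← Real.exp_zero]; exact Real.exp_le_exp.2 (by linarith)
  nlinarith

lemma phi_hasDerivAt {c : ℝ} (hc : 0 < c) {t : ℝ} (ht : 0 ≤ t) :
    HasDerivAt (phi c) (2 * (phi c t * (1 - phi c t))) t := by
  have hD : 0 < 1 + c * (exp (2 * t) - 1) := phi_denom_pos hc ht
  have he : HasDerivAt (fun s : ℝ => exp (2 * s)) (2 * exp (2 * t)) t := by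
    simpa [mul_comm] using (HasDerivAt.exp ((hasDerivAt_id t).const_mul 2))
  have hnum : HasDerivAt (fun s => c * exp (2 * s)) (c * (2 * exp (2 * t))) t :=
    he.const_mul c
  have hden : HasDerivAt (fun s => 1 + c * (exp (2 * s) - 1))
      (c * (2 * exp (2 * t))) t := by
    simpa using ((he.sub_const 1).const_mul c).const_add 1
  have := hnum.div hden (ne_of_gt hD)
  refine this.congr_deriv ?_
  unfold phi
  field_simp

lemma phi_tendsto {c : ℝ} (hc : 0 < c) :
    Tendsto (phi c) atTop (nhds 1) := by
  have key : ∀ t : ℝ, phi c t = c / ((1 - c) * exp (-(2 * t)) + c) := by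
    intro t
    have he : exp (2 * t) ≠ 0 := (Real.exp_pos _).ne'
    unfold phi
    rw [Real.exp_neg]
    field_simp
    ring
  rw [show phi c = fun t => c / ((1 - c) * exp (-(2 * t)) + c) from funext key]
  have h1 : Tendsto (fun t : ℝ => (1 - c) * exp (-(2 * t)) + c) atTop (nhds c) := by
    have : Tendsto (fun t : ℝ => -(2 * t)) atTop atBot := by
      apply tendsto_neg_atBot_iff.2
      exact tendsto_id.const_mul_atTop two_pos
    have := (Real.tendsto_exp_atBot.comp this).const_mul (1 - c)
    simpa using this.add_const c
  have := Tendsto.div (tendsto_const_nhds : Tendsto (fun _ : ℝ => c) atTop (nhds c)) h1 hc.ne'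
  simpa [div_self hc.ne', Pi.div_def] using this

lemma logistic_lipschitz {M : ℝ} (hM : 0 ≤ M) :
    LipschitzOnWith (Real.toNNReal (2 + 4 * M)) (fun z : ℝ => 2 * (z * (1 - z)))
      (Icc (-M) M) := by
  apply LipschitzOnWith.of_dist_le_mul
  intro x hx y hy
  rw [Real.dist_eq, Real.dist_eq, Real.coe_toNNReal _ (by linarith)]
  have h : 2 * (x * (1 - x)) - 2 * (y * (1 - y)) = (2 - 2 * (x + y)) * (x - y) := by ring
  rw [h, abs_mul]
  have hb : |2 - 2 * (x + y)| ≤ 2 + 4 * M := by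
    rw [abs_le]
    obtain ⟨hx1, hx2⟩ := hx; obtain ⟨hy1, hy2⟩ := hy
    constructor <;> linarith
  exact mul_le_mul_of_nonneg_right hb (abs_nonneg _) |>.trans_eq rfl |>.trans
    (le_of_eq rfl)



/-- The unit sphere is globally attracting: any solution with nonzero initial condition
has norm tending to 1 as `t → +∞`. -/
theorem stmt2 (α₁ α₂ lam₁ lam₂ : ℝ) (u : ℝ → EuclideanSpace ℝ (Fin 4))
    (hu : ∀ t : ℝ, 0 ≤ t → HasDerivAt u (Xfield α₁ α₂ lam₁ lam₂ (u t)) t)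
    (h0 : u 0 ≠ 0) :
    Tendsto (fun t : ℝ => ‖u t‖) atTop (nhds 1) := by
  set y : ℝ → ℝ := fun t => inner ℝ (u t) (u t) with hy_def
  set c : ℝ := y 0 with hc_def
  have hc : 0 < c := by
    have he : c = ‖u 0‖ ^ 2 := real_inner_self_eq_norm_sq _
    rw [he]
    exact pow_pos (norm_pos_iff.2 h0) 2
  have hy' : ∀ t : ℝ, 0 ≤ t → HasDerivAt y (2 * (y t * (1 - y t))) t := by
    intro t ht
    have H := HasDerivAt.inner ℝ (hu t ht) (hu t ht)
    rw [inner_X α₁ α₂ lam₁ lam₂ (u t)] at H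
    exact H
  -- uniqueness: y = phi c on [0, ∞)
  have key : ∀ t : ℝ, 0 ≤ t → y t = phi c t := by
    intro T hT
    have hy_cont : ContinuousOn y (Icc 0 T) := fun s hs =>
      ((hy' s hs.1).continuousAt).continuousWithinAt
    have hphi_cont : ContinuousOn (phi c) (Icc 0 T) := fun s hs =>
      ((phi_hasDerivAt hc hs.1).continuousAt).continuousWithinAt
    obtain ⟨C1, hC1⟩ := isCompact_Icc.exists_bound_of_continuousOn hy_cont
    obtain ⟨C2, hC2⟩ := isCompact_Icc.exists_bound_of_continuousOn hphi_cont
    set M : ℝ := max 1 (max C1 C2) with hM_def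
    have hM0 : (0:ℝ) ≤ M := le_trans zero_le_one (le_max_left _ _)
    have hyM : ∀ s ∈ Icc (0:ℝ) T, y s ∈ Icc (-M) M := by
      intro s hs
      have := hC1 s hs
      rw [Real.norm_eq_abs, abs_le] at this
      have h1 : C1 ≤ M := (le_max_left C1 C2).trans (le_max_right _ _)
      exact ⟨by linarith [this.1], by linarith [this.2]⟩
    have hphiM : ∀ s ∈ Icc (0:ℝ) T, phi c s ∈ Icc (-M) M := by
      intro s hs
      have := hC2 s hs
      rw [Real.norm_eq_abs, abs_le] at this
      have h2 : C2 ≤ M := (le_max_right C1 C2).trans (le_max_right _ _)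
      exact ⟨by linarith [this.1], by linarith [this.2]⟩
    have ha : y 0 = phi c 0 := by
      simp [phi, hc_def]
    have := ODE_solution_unique_of_mem_Icc_right
      (v := fun _ z => 2 * (z * (1 - z))) (s := fun _ => Icc (-M) M)
      (fun _ _ => logistic_lipschitz hM0)
      hy_cont
      (fun s hs => (hy' s hs.1).hasDerivWithinAt)
      (fun s hs => hyM s ⟨hs.1, hs.2.le⟩)
      hphi_cont
      (fun s hs => (phi_hasDerivAt hc hs.1).hasDerivWithinAt)
      (fun s hs => hphiM s ⟨hs.1, hs.2.le⟩)
      ha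
    exact this ⟨hT, le_refl T⟩
  -- conclude
  have hsqrt : Tendsto (fun t => Real.sqrt (phi c t)) atTop (nhds 1) := by
    have := (Real.continuous_sqrt.continuousAt (x := (1:ℝ))).tendsto.comp (phi_tendsto hc)
    simpa [Function.comp_def] using this
  apply hsqrt.congr'
  filter_upwards [eventually_ge_atTop (0:ℝ)] with t ht
  rw [← key t ht]
  show Real.sqrt (inner ℝ (u t) (u t) : ℝ) = ‖u t‖
  rw [real_inner_self_eq_norm_sq]
  exact Real.sqrt_sq (norm_nonneg _)
end

section
/- Suppose α₂ < 0 < α₁, α₁ + α₂ > 0 and λ₂ = 0 (λ₁ arbitrary). Then the set of equilibria of X, i.e. {x ∈ ℝ⁴ : X(x) = 0}, is exactly {(0,0,0,0), v, w}, where v = (0,0,0,1) and w = (0,0,0,−1). -/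
/-- The equilibrium `v = (0,0,0,1)`. -/
noncomputable def vpt : EuclideanSpace ℝ (Fin 4) := WithLp.toLp 2 ![0, 0, 0, 1]

/-- The equilibrium `w = (0,0,0,−1)`. -/
noncomputable def wpt : EuclideanSpace ℝ (Fin 4) := WithLp.toLp 2 ![0, 0, 0, -1]

/-- For `α₂ < 0 < α₁`, `α₁ + α₂ > 0` and `λ₂ = 0`, the equilibria of `X` are exactly
the origin, `v` and `w`. -/
theorem stmt3 (α₁ α₂ lam₁ : ℝ) (h₂ : α₂ < 0) (h₁ : 0 < α₁) (hsum : α₁ + α₂ > 0) :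
    {x : EuclideanSpace ℝ (Fin 4) | Xfield α₁ α₂ lam₁ 0 x = 0} = {0, vpt, wpt} := by
  ext x
  simp only [Set.mem_setOf_eq, Set.mem_insert_iff, Set.mem_singleton_iff]
  constructor
  · intro h
    have e0 : (Xfield α₁ α₂ lam₁ 0 x) 0 = 0 := by rw [h]; rfl
    have e1 : (Xfield α₁ α₂ lam₁ 0 x) 1 = 0 := by rw [h]; rfl
    have e2 : (Xfield α₁ α₂ lam₁ 0 x) 2 = 0 := by rw [h]; rfl
    have e3 : (Xfield α₁ α₂ lam₁ 0 x) 3 = 0 := by rw [h]; rfl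
    simp only [Xfield, WithLp.ofLp_toLp, Matrix.cons_val_zero, Matrix.cons_val_one, Matrix.head_cons,
      Matrix.cons_val_two, Matrix.tail_cons, Matrix.cons_val_three, Matrix.cons_val_fin_one,
      zero_mul, mul_zero, add_zero, sub_zero] at e0 e1 e2 e3
    have key : x 0 ^ 2 + x 1 ^ 2 = 0 := by linear_combination x 0 * e1 - x 1 * e0
    have ha : x 0 = 0 := by nlinarith [sq_nonneg (x 0), sq_nonneg (x 1)]
    have hb : x 1 = 0 := by nlinarith [sq_nonneg (x 0), sq_nonneg (x 1)]
    rw [ha, hb] at e2 e3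
    by_cases hc : x 2 = 0
    · rw [hc] at e3
      have hd : x 3 * (1 - x 3) * (1 + x 3) = 0 := by linear_combination e3
      rcases mul_eq_zero.1 hd with hd' | hd3
      · rcases mul_eq_zero.1 hd' with hd1 | hd2
        · left
          ext i; fin_cases i <;> simp [ha, hb, hc, hd1]
        · right; left
          ext i; fin_cases i <;> simp [vpt, ha, hb, hc] <;> linarith
      · right; right
        ext i; fin_cases i <;> simp [wpt, ha, hb, hc] <;> linarith
    · exfalso
      have hA : 1 - x 2 ^ 2 - x 3 ^ 2 + α₁ * x 3 + α₂ * x 3 ^ 2 = 0 := by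
        apply mul_left_cancel₀ hc
        linear_combination e2
      have h4 : (x 2 ^ 2 + x 3 ^ 2) * (α₁ + α₂ * x 3) = 0 := by
        linear_combination x 3 * hA - e3
      have hpos : 0 < x 2 ^ 2 + x 3 ^ 2 := by positivity
      have h5 : α₁ + α₂ * x 3 = 0 := by
        rcases mul_eq_zero.1 h4 with h' | h'
        · linarith
        · exact h'
      have hc2 : 0 < x 2 ^ 2 := by positivity
      have hd1 : 1 < x 3 := by nlinarith
      nlinarith
  · rintro (rfl | rfl | rfl) <;>
    · ext i
      fin_cases i <;> simp [Xfield, vpt, wpt] <;> ring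
end

section
/- Heteroclinic connections from v to w (Theorem 3.1, item 1): suppose α₂ < 0 < α₁, α₁ + α₂ > 0 and λ₂ = 0 (λ₁ arbitrary). Let u : ℝ → ℝ⁴ be differentiable with u'(t) = X(u(t)) for all t, with u₁(t) = u₂(t) = 0 and u₃(t)² + u₄(t)² = 1 for all t, and with u(0) ∉ {v, w}. Then u(t) → w as t → +∞ and u(t) → v as t → −∞. -/
open Filter

private lemma scalarAux (c : ℝ) (hcpos : 0 < c) (g y : ℝ → ℝ)
    (hy : ∀ t, HasDerivAt y (-((1 - (y t) ^ 2) * g t)) t)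
    (hg : ∀ t, c ≤ g t)
    (hb : ∀ t, (y t) ^ 2 ≤ 1) (h1 : y 0 < 1) :
    Tendsto y atTop (nhds (-1)) := by
  have hbd : ∀ t, -1 ≤ y t ∧ y t ≤ 1 := by
    intro t
    constructor <;> nlinarith [hb t, sq_nonneg (y t + 1), sq_nonneg (y t - 1)]
  have hdiff : Differentiable ℝ y := fun t => (hy t).differentiableAt
  have hanti : Antitone y := by
    apply antitone_of_deriv_nonpos hdiff
    intro t
    rw [(hy t).deriv]
    nlinarith [hg t, hb t]
  have hbB : BddBelow (Set.range y) := by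
    refine ⟨-1, ?_⟩
    rintro x ⟨t, rfl⟩
    exact (hbd t).1
  have hL : Tendsto y atTop (nhds (⨅ t, y t)) := tendsto_atTop_ciInf hanti hbB
  have hLge : -1 ≤ ⨅ t, y t := le_ciInf fun t => (hbd t).1
  have hLeq : (⨅ t, y t) = -1 := by
    by_contra hne
    have hLgt : -1 < ⨅ t, y t := lt_of_le_of_ne hLge (Ne.symm hne)
    set L := ⨅ t, y t with hLdef
    have hyL : ∀ t, L ≤ y t := fun t => ciInf_le hbB t
    set c' := (1 - y 0) * ((1 + L) * c) with hc'
    have hc'pos : 0 < c' := by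
      apply mul_pos (by linarith) (mul_pos (by linarith) hcpos)
    have hAnti : AntitoneOn (fun s => y s + c' * s) (Set.Ici (0 : ℝ)) := by
      apply antitoneOn_of_deriv_nonpos (convex_Ici 0)
      · exact (hdiff.continuous.add (continuous_const.mul continuous_id)).continuousOn
      · intro t _
        exact ((hdiff t).add ((differentiable_id.const_mul c') t)).differentiableWithinAt
      · intro t ht
        rw [interior_Ici] at ht
        have hder : HasDerivAt (fun s => y s + c' * s)
            (-((1 - (y t) ^ 2) * g t) + c') t := by
          have h := (hy t).add ((hasDerivAt_id' t).const_mul c')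
          rw [mul_one] at h
          exact h
        rw [hder.deriv]
        have hyt0 : y t ≤ y 0 := hanti (le_of_lt ht)
        have key : (1 - y 0) * ((1 + L) * c) ≤ (1 - y t) * ((1 + y t) * g t) := by
          apply mul_le_mul (by linarith) ?_ (mul_nonneg (by linarith) hcpos.le) (by linarith [(hbd t).2])
          apply mul_le_mul (by linarith [hyL t]) (hg t) (le_of_lt hcpos)
            (by linarith [hyL t])
        nlinarith
    have hT0 : (0 : ℝ) ≤ (y 0 + 2) / c' := by
      apply div_nonneg (by linarith [(hbd 0).1]) (le_of_lt hc'pos)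
    have := hAnti (Set.self_mem_Ici) (Set.mem_Ici.2 hT0) hT0
    simp only [mul_zero, add_zero] at this
    rw [mul_div_cancel₀ _ (ne_of_gt hc'pos)] at this
    linarith [(hbd ((y 0 + 2) / c')).1]
  rw [hLeq] at hL
  exact hL

private lemma scalarAux' (c : ℝ) (hcpos : 0 < c) (g y : ℝ → ℝ)
    (hy : ∀ t, HasDerivAt y (-((1 - (y t) ^ 2) * g t)) t)
    (hg : ∀ t, c ≤ g t)
    (hb : ∀ t, (y t) ^ 2 ≤ 1) (h0 : -1 < y 0) :
    Tendsto y atBot (nhds 1) := by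
  have key : Tendsto (fun t => -y (-t)) atTop (nhds (-1)) := by
    refine scalarAux c hcpos (fun t => g (-t)) (fun t => -y (-t)) ?_ (fun t => hg (-t))
      (fun t => by simpa using hb (-t)) (by simp only [neg_zero]; linarith)
    intro t
    have h := ((hy (-t)).comp t (hasDerivAt_neg t)).neg
    refine HasDerivAt.congr_deriv h ?_
    simp only [neg_sq]
    ring
  have key2 : Tendsto (fun t => y (-t)) atTop (nhds 1) := by
    have := key.neg
    simpa using this
  have := key2.comp tendsto_neg_atBot_atTop
  simpa [Function.comp_def, neg_neg] using this
/-- Theorem 3.1, item 1: for `λ₂ = 0`, any nonequilibrium solution on the invariant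
circle `{x₁ = x₂ = 0, x₃² + x₄² = 1}` is a heteroclinic connection from `v` to `w`. -/
theorem stmt15 (α₁ α₂ lam₁ : ℝ) (h₂ : α₂ < 0) (h₁ : 0 < α₁) (hsum : α₁ + α₂ > 0)
    (u : ℝ → EuclideanSpace ℝ (Fin 4))
    (hu : ∀ t : ℝ, HasDerivAt u (Xfield α₁ α₂ lam₁ 0 (u t)) t)
    (hc₁ : ∀ t : ℝ, u t 0 = 0) (hc₂ : ∀ t : ℝ, u t 1 = 0)
    (hc : ∀ t : ℝ, (u t 2) ^ 2 + (u t 3) ^ 2 = 1)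
    (hne : u 0 ≠ vpt ∧ u 0 ≠ wpt) :
    Tendsto u atTop (nhds wpt) ∧ Tendsto u atBot (nhds vpt) := by
  have hb : ∀ t, (u t 3) ^ 2 ≤ 1 := fun t => by nlinarith [hc t, sq_nonneg (u t 2)]
  have hbd : ∀ t, -1 ≤ u t 3 ∧ u t 3 ≤ 1 := by
    intro t
    constructor <;> nlinarith [hb t, sq_nonneg (u t 3 + 1), sq_nonneg (u t 3 - 1)]
  have hy : ∀ t, HasDerivAt (fun s => u s 3)
      (-((1 - (u t 3) ^ 2) * (α₁ + α₂ * u t 3))) t := by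
    intro t
    have h := (EuclideanSpace.proj (3 : Fin 4)).hasFDerivAt.comp_hasDerivAt t (hu t)
    simp only [PiLp.proj_apply] at h
    refine HasDerivAt.congr_deriv h ?_
    have hz2 : (u t 2) ^ 2 = 1 - (u t 3) ^ 2 := by linarith [hc t]
    simp [Xfield, hc₁ t, hc₂ t, hz2]
    ring
  have hg : ∀ t, α₁ + α₂ ≤ α₁ + α₂ * u t 3 := by
    intro t
    nlinarith [(hbd t).2]
  have h1 : u 0 3 < 1 := by
    rcases lt_or_eq_of_le (hbd 0).2 with h | h
    · exact h
    · exfalso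
      apply hne.1
      have hz : u 0 2 = 0 := by
        have : (u 0 2) ^ 2 = 0 := by nlinarith [hc 0, h]
        exact pow_eq_zero_iff (by norm_num) |>.mp this
      ext i
      fin_cases i <;> simp [vpt, hc₁ 0, hc₂ 0, hz, h]
  have h0 : -1 < u 0 3 := by
    rcases lt_or_eq_of_le (hbd 0).1 with h | h
    · exact h
    · exfalso
      apply hne.2
      have hz : u 0 2 = 0 := by
        have : (u 0 2) ^ 2 = 0 := by nlinarith [hc 0, h]
        exact pow_eq_zero_iff (by norm_num) |>.mp this
      ext i
      fin_cases i <;> simp [wpt, hc₁ 0, hc₂ 0, hz, ← h]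
  have ytop : Tendsto (fun t => u t 3) atTop (nhds (-1)) :=
    scalarAux (α₁ + α₂) hsum (fun t => α₁ + α₂ * u t 3) _ hy hg hb h1
  have ybot : Tendsto (fun t => u t 3) atBot (nhds 1) :=
    scalarAux' (α₁ + α₂) hsum (fun t => α₁ + α₂ * u t 3) _ hy hg hb h0
  have habs : ∀ t, ‖u t 2‖ ≤ Real.sqrt (1 - (u t 3) ^ 2) := by
    intro t
    rw [Real.norm_eq_abs, ← Real.sqrt_sq_eq_abs]
    apply le_of_eq
    congr 1
    linarith [hc t]
  have ztop : Tendsto (fun t => u t 2) atTop (nhds 0) := by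
    apply squeeze_zero_norm habs
    have : Tendsto (fun t => 1 - (u t 3) ^ 2) atTop (nhds 0) := by
      have := ((tendsto_const_nhds : Tendsto (fun _ : ℝ => (1:ℝ)) atTop (nhds 1)).sub (ytop.pow 2))
      norm_num at this
      exact this
    simpa using this.sqrt
  have zbot : Tendsto (fun t => u t 2) atBot (nhds 0) := by
    apply squeeze_zero_norm habs
    have : Tendsto (fun t => 1 - (u t 3) ^ 2) atBot (nhds 0) := by
      have := ((tendsto_const_nhds : Tendsto (fun _ : ℝ => (1:ℝ)) atBot (nhds 1)).sub (ybot.pow 2))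
      norm_num at this
      exact this
    simpa using this.sqrt
  constructor
  · rw [(PiLp.homeomorph 2 (fun _ : Fin 4 => ℝ)).isInducing.tendsto_nhds_iff, tendsto_pi_nhds]
    intro i
    fin_cases i
    · show Tendsto (fun t => u t 0) atTop (nhds (wpt 0))
      simp only [hc₁, wpt, Matrix.cons_val_zero]
      exact tendsto_const_nhds
    · show Tendsto (fun t => u t 1) atTop (nhds (wpt 1))
      simp only [hc₂, wpt, Matrix.cons_val_one, Matrix.head_cons]
      exact tendsto_const_nhds
    · show Tendsto (fun t => u t 2) atTop (nhds (wpt 2))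
      have : wpt 2 = 0 := by simp [wpt]
      rw [this]; exact ztop
    · show Tendsto (fun t => u t 3) atTop (nhds (wpt 3))
      have : wpt 3 = -1 := by simp [wpt]
      rw [this]; exact ytop
  · rw [(PiLp.homeomorph 2 (fun _ : Fin 4 => ℝ)).isInducing.tendsto_nhds_iff, tendsto_pi_nhds]
    intro i
    fin_cases i
    · show Tendsto (fun t => u t 0) atBot (nhds (vpt 0))
      simp only [hc₁, vpt, Matrix.cons_val_zero]
      exact tendsto_const_nhds
    · show Tendsto (fun t => u t 1) atBot (nhds (vpt 1))
      simp only [hc₂, vpt, Matrix.cons_val_one, Matrix.head_cons]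
      exact tendsto_const_nhds
    · show Tendsto (fun t => u t 2) atBot (nhds (vpt 2))
      have : vpt 2 = 0 := by simp [vpt]
      rw [this]; exact zbot
    · show Tendsto (fun t => u t 3) atBot (nhds (vpt 3))
      have : vpt 3 = 1 := by simp [vpt]
      rw [this]; exact ybot
end

section
/- Content of Proposition 3.1 (uniform rotation about the connection [v → w]): when λ₂ = 0 (λ₁ arbitrary), for every x ∈ ℝ⁴ the angular identity x₁·X₂(x) − x₂·X₁(x) = x₁² + x₂² holds, where X₁, X₂ denote the first two components of X. Consequently, in polar coordinates (x₁,x₂) = (s cos φ, s sin φ) the angular velocity satisfies φ̇ = 1 wherever x₁² + x₂² > 0, so any trajectory turns around the connection [v → w] in the same direction near v and near w. -/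
/-- Proposition 3.1 (uniform rotation about the connection `[v → w]`): for `λ₂ = 0`,
the angular identity `x₁·X₂(x) − x₂·X₁(x) = x₁² + x₂²` holds for every `x`; hence in
polar coordinates in the `(x₁,x₂)`-plane the angular velocity is `φ̇ = 1` wherever
`x₁² + x₂² > 0`, so trajectories turn around `[v → w]` in the same direction near `v`
and near `w`. -/
theorem stmt16 (α₁ α₂ lam₁ : ℝ) :
    (∀ x : EuclideanSpace ℝ (Fin 4),
      x 0 * Xfield α₁ α₂ lam₁ 0 x 1 - x 1 * Xfield α₁ α₂ lam₁ 0 x 0 =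
        (x 0) ^ 2 + (x 1) ^ 2) ∧
    (∀ x : EuclideanSpace ℝ (Fin 4), (x 0) ^ 2 + (x 1) ^ 2 > 0 →
      (x 0 * Xfield α₁ α₂ lam₁ 0 x 1 - x 1 * Xfield α₁ α₂ lam₁ 0 x 0) /
        ((x 0) ^ 2 + (x 1) ^ 2) = 1) := by
  have key : ∀ x : EuclideanSpace ℝ (Fin 4),
      x 0 * Xfield α₁ α₂ lam₁ 0 x 1 - x 1 * Xfield α₁ α₂ lam₁ 0 x 0 =
        (x 0) ^ 2 + (x 1) ^ 2 := by
    intro x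
    simp only [Xfield, PiLp.toLp_apply, Matrix.cons_val_zero, Matrix.cons_val_one, Matrix.head_cons]
    ring
  exact ⟨key, fun x hx => by rw [key x]; field_simp⟩
end
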